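/- Let T : P(F) → P(F̃) be a convex-linear map between density matrices on separable Hilbert spaces. Suppose f : [0,∞) → ℝ is continuous, convex, and satisfies: there exist c₁, c₂, c₃ ≥ 0 with |f((1−ε)x) − f(x)| ≤ |ε|(c₁|f(x)| + c₂|x| + c₃) for all x ≥ 0 and sufficiently small |ε|. Suppose there exist positive-definite density matrices ρ_∞ ∈ P(F) and ρ̃_∞ ∈ P(F̃) with T(ρ_∞) = ρ̃_∞. Let ρ₀ ∈ P(F) satisfy [ρ_∞, ρ₀] = 0, [ρ̃_∞, T(ρ₀)] = 0, and Tr[ρ_∞ |f(ρ₀ ρ_∞^{−1})|] < ∞. Then −Tr[ρ̃_∞ f(T(ρ₀) ρ̃_∞^{−1})] ≥ −Tr[ρ_∞ f(ρ₀ ρ_∞^{−1})]. -/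

import Mathlib

open scoped BigOperators

local notation "⟪" x ", " y "⟫" => @inner ℂ _ _ x y

def IsDensityMatrix {F : Type*} [NormedAddCommGroup F] [InnerProductSpace ℂ F]
    [CompleteSpace F] (b : HilbertBasis ℕ ℂ F) (ρ : F →L[ℂ] F) : Prop :=
  ρ.IsPositive ∧ HasSum (fun i => ⟪b i, ρ (b i)⟫) 1

set_option linter.unusedSectionVars false
set_option synthInstance.maxHeartbeats 1000000
set_option maxHeartbeats 2000000

section prelim
variable {F : Type*} [NormedAddCommGroup F] [InnerProductSpace ℂ F] [CompleteSpace F]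
  (b : HilbertBasis ℕ ℂ F)

lemma diag_hasSum_apply (D : F →L[ℂ] F) (d : ℕ → ℂ) (hD : ∀ i, D (b i) = d i • b i) (x : F) :
    HasSum (fun i => (⟪b i, x⟫ * d i) • b i) (D x) := by
  have h := (b.hasSum_repr x).mapL D
  convert h using 2 with i
  rw [b.repr_apply_apply, map_smul, hD, smul_smul]

lemma diag_inner (D : F →L[ℂ] F) (d : ℕ → ℂ) (hD : ∀ i, D (b i) = d i • b i) (x y : F) :
    HasSum (fun i => ⟪y, b i⟫ * ⟪b i, x⟫ * d i) ⟪y, D x⟫ := by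
  have h := (diag_hasSum_apply b D d hD x).mapL (innerSL ℂ y)
  convert h using 2 with i
  · rfl
  simp [inner_smul_right, innerSL_apply_apply]
  ring
  rfl

lemma diag_inner_basis (D : F →L[ℂ] F) (d : ℕ → ℂ) (hD : ∀ i, D (b i) = d i • b i) (i : ℕ) :
    ⟪b i, D (b i)⟫ = d i := by
  rw [hD, inner_smul_right, orthonormal_iff_ite.mp b.orthonormal i i]
  simp

lemma diag_isSelfAdjoint (D : F →L[ℂ] F) (d : ℕ → ℝ)
    (hD : ∀ i, D (b i) = (d i : ℂ) • b i) : IsSelfAdjoint D := by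
  rw [ContinuousLinearMap.isSelfAdjoint_iff_isSymmetric]
  intro x y
  have h1 := (diag_inner b D _ hD x y).star
  have h2 := diag_inner b D _ hD y x
  have he : (fun i => star (⟪y, b i⟫ * ⟪b i, x⟫ * (d i : ℂ)))
      = fun i => ⟪x, b i⟫ * ⟪b i, y⟫ * (d i : ℂ) := by
    funext i
    simp only [star_mul', RCLike.star_def, inner_conj_symm, Complex.conj_ofReal]
    ring
  rw [he] at h1
  have h3 : ⟪x, D y⟫ = star ⟪y, D x⟫ := h2.unique h1
  have h4 : star ⟪y, D x⟫ = ⟪D x, y⟫ := inner_conj_symm (D x) y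
  show ⟪D x, y⟫ = ⟪x, D y⟫
  rw [h3, h4]

lemma diag_isPositive (D : F →L[ℂ] F) (d : ℕ → ℝ) (hd : ∀ i, 0 ≤ d i)
    (hD : ∀ i, D (b i) = (d i : ℂ) • b i) : D.IsPositive := by
  refine ⟨(diag_isSelfAdjoint b D d hD).isSymmetric, fun x => ?_⟩
  have h := (diag_inner b D _ hD x x).mapL Complex.reCLM
  have hterm : ∀ i, Complex.reCLM (⟪x, b i⟫ * ⟪b i, x⟫ * (d i : ℂ))
      = Complex.normSq ⟪b i, x⟫ * d i := by
    intro i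
    simp only [Complex.reCLM_apply]
    have hz : ⟪x, b i⟫ = (starRingEnd ℂ) ⟪b i, x⟫ := (inner_conj_symm x (b i)).symm
    rw [hz, mul_comm ((starRingEnd ℂ) ⟪b i, x⟫) ⟪b i, x⟫, Complex.mul_conj,
      ← Complex.ofReal_mul]
    exact Complex.ofReal_re _
  rw [funext hterm] at h
  have hnn : 0 ≤ (⟪x, D x⟫).re := by
    refine hasSum_le (fun i => ?_) hasSum_zero h
    exact mul_nonneg (Complex.normSq_nonneg _) (hd i)
  rw [ContinuousLinearMap.reApplyInnerSelf, inner_re_symm]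
  exact hnn

-- real smul as complex smul
lemma real_smul_op (c : ℝ) (ρ : F →L[ℂ] F) : c • ρ = (c : ℂ) • ρ := by
  exact RCLike.real_smul_eq_coe_smul (K := ℂ) c ρ

lemma isDensityMatrix_of_diag (D : F →L[ℂ] F) (d : ℕ → ℝ) (hd : ∀ i, 0 ≤ d i)
    (hsum : HasSum d 1) (hD : ∀ i, D (b i) = (d i : ℂ) • b i) : IsDensityMatrix b D := by
  refine ⟨diag_isPositive b D d hd hD, ?_⟩
  have h := (Complex.hasSum_ofReal (f := d) (x := 1)).mpr hsum
  have he : (fun i => ((d i : ℝ) : ℂ)) = fun i => ⟪b i, D (b i)⟫ := by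
    funext i; rw [diag_inner_basis b D _ hD]
  rw [he] at h
  simpa using h

lemma trace_re (D : F →L[ℂ] F) (h : IsDensityMatrix b D) :
    HasSum (fun i => (⟪b i, D (b i)⟫).re) 1 := by
  have := h.2.mapL Complex.reCLM
  simpa using this

lemma eigen_nonneg (D : F →L[ℂ] F) (d : ℕ → ℝ) (hD : ∀ i, D (b i) = (d i : ℂ) • b i)
    (h : D.IsPositive) (i : ℕ) : 0 ≤ d i := by
  have h2 := h.inner_nonneg_right (b i)
  rw [diag_inner_basis b D _ hD i] at h2
  simpa using h2

lemma eigen_hasSum (D : F →L[ℂ] F) (d : ℕ → ℝ) (hD : ∀ i, D (b i) = (d i : ℂ) • b i)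
    (h : IsDensityMatrix b D) : HasSum d 1 := by
  have h2 := trace_re b D h
  have he : (fun i => (⟪b i, D (b i)⟫).re) = d := by
    funext i; rw [diag_inner_basis b D _ hD]; simp
  rwa [he] at h2

/-- the rank-one projection onto `b i` -/
noncomputable def rankOne (i : ℕ) : F →L[ℂ] F := (innerSL ℂ (b i)).smulRight (b i)

lemma rankOne_diag (i m : ℕ) :
    rankOne b i (b m) = ((if m = i then (1:ℝ) else 0 : ℝ) : ℂ) • b m := by
  simp only [rankOne, ContinuousLinearMap.smulRight_apply, innerSL_apply_apply]
  rw [orthonormal_iff_ite.mp b.orthonormal i m]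
  by_cases h : m = i
  · subst h; simp
  · simp only [h, if_false, Complex.ofReal_zero, zero_smul, ite_smul, one_smul, zero_smul]
    rw [if_neg (fun h' => h h'.symm)]

lemma rankOne_isDensityMatrix (i : ℕ) : IsDensityMatrix b (rankOne b i) := by
  refine isDensityMatrix_of_diag b _ _ (fun m => by positivity) ?_ (rankOne_diag b i)
  exact hasSum_ite_eq i 1

lemma inner_real_smul_right (c : ℝ) (x y : F) : ⟪x, c • y⟫ = (c : ℂ) * ⟪x, y⟫ := by
  rw [show c • y = (c : ℂ) • y from RCLike.real_smul_eq_coe_smul (K := ℂ) c y,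
    inner_smul_right]

lemma isPositive_real_smul (c : ℝ) (hc : 0 ≤ c) (ρ : F →L[ℂ] F) (h : ρ.IsPositive) :
    (c • ρ).IsPositive := by
  constructor
  · rw [← ContinuousLinearMap.isSelfAdjoint_iff_isSymmetric]
    show star (c • ρ) = c • ρ
    rw [real_smul_op, star_smul, RCLike.star_def, Complex.conj_ofReal, h.isSelfAdjoint.star_eq]
  · intro x
    rw [ContinuousLinearMap.reApplyInnerSelf]
    have : (c • ρ) x = c • ρ x := by simp
    rw [this, show c • ρ x = (c:ℂ) • ρ x from RCLike.real_smul_eq_coe_smul (K := ℂ) _ _,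
      inner_smul_left, Complex.conj_ofReal]
    rw [show RCLike.re ((c:ℂ) * inner ℂ (ρ x) x) = c * RCLike.re (inner ℂ (ρ x) x : ℂ) from RCLike.re_ofReal_mul c _]
    exact mul_nonneg hc (h.2 x)

lemma isDensityMatrix_convex (a : ℝ) (ha : 0 ≤ a) (ha1 : a ≤ 1) (ρ₁ ρ₂ : F →L[ℂ] F)
    (h₁ : IsDensityMatrix b ρ₁) (h₂ : IsDensityMatrix b ρ₂) :
    IsDensityMatrix b (a • ρ₁ + (1 - a) • ρ₂) := by
  constructor
  · exact (isPositive_real_smul a ha ρ₁ h₁.1).add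
      (isPositive_real_smul (1 - a) (by linarith) ρ₂ h₂.1)
  · have hterm : ∀ i, ⟪b i, (a • ρ₁ + (1 - a) • ρ₂) (b i)⟫
        = (a : ℂ) * ⟪b i, ρ₁ (b i)⟫ + ((1 - a : ℝ) : ℂ) * ⟪b i, ρ₂ (b i)⟫ := by
      intro i
      simp only [ContinuousLinearMap.add_apply, ContinuousLinearMap.smul_apply,
        inner_add_right]
      rw [inner_real_smul_right, inner_real_smul_right]
    rw [funext hterm]
    have := (h₁.2.mul_left (a : ℂ)).add (h₂.2.mul_left ((1 - a : ℝ) : ℂ))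
    convert this using 1
    · rfl
    push_cast
    ring

end prelim

section FL
variable {F F' : Type*} [NormedAddCommGroup F] [InnerProductSpace ℂ F] [CompleteSpace F]
  [NormedAddCommGroup F'] [InnerProductSpace ℂ F'] [CompleteSpace F']
  (bF : HilbertBasis ℕ ℂ F) (bF' : HilbertBasis ℕ ℂ F')

lemma T_finite_comb (T : (F →L[ℂ] F) → (F' →L[ℂ] F'))
    (hlin : ∀ a : ℝ, 0 ≤ a → a ≤ 1 → ∀ ρ₁ ρ₂ : F →L[ℂ] F,
      IsDensityMatrix bF ρ₁ → IsDensityMatrix bF ρ₂ →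
      T (a • ρ₁ + (1 - a) • ρ₂) = a • T ρ₁ + (1 - a) • T ρ₂) :
    ∀ (n : ℕ) (w : ℕ → ℝ) (σ : ℕ → F →L[ℂ] F), (∀ i, 0 ≤ w i) →
      (∀ i, IsDensityMatrix bF (σ i)) → (∑ i ∈ Finset.range n, w i) = 1 →
      IsDensityMatrix bF (∑ i ∈ Finset.range n, w i • σ i) ∧
      T (∑ i ∈ Finset.range n, w i • σ i) = ∑ i ∈ Finset.range n, w i • T (σ i) := by
  intro n
  induction n with
  | zero => intro w σ hw hσ hsum; simp at hsum
  | succ n ih =>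
    intro w σ hw hσ hsum
    rw [Finset.sum_range_succ] at hsum
    have hs0 : 0 ≤ ∑ i ∈ Finset.range n, w i := Finset.sum_nonneg (fun i _ => hw i)
    set s := ∑ i ∈ Finset.range n, w i with hs
    have hwn : w n = 1 - s := by linarith
    by_cases hzero : s = 0
    · have hall : ∀ i ∈ Finset.range n, w i = 0 :=
        (Finset.sum_eq_zero_iff_of_nonneg (fun i _ => hw i)).mp (by rw [← hs, hzero])
      have hwn1 : w n = 1 := by rw [hwn, hzero]; ring
      have h1 : ∑ i ∈ Finset.range (n+1), w i • σ i = σ n := by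
        rw [Finset.sum_range_succ, Finset.sum_eq_zero (fun i hi => by rw [hall i hi, zero_smul]),
          zero_add, hwn1, one_smul]
      have h2 : ∑ i ∈ Finset.range (n+1), w i • T (σ i) = T (σ n) := by
        rw [Finset.sum_range_succ, Finset.sum_eq_zero (fun i hi => by rw [hall i hi, zero_smul]),
          zero_add, hwn1, one_smul]
      rw [h1, h2]
      exact ⟨hσ n, rfl⟩
    · have hspos : 0 < s := lt_of_le_of_ne hs0 (Ne.symm hzero)
      have hwn0 : 0 ≤ w n := hw n
      have hs1 : s ≤ 1 := by linarith
      have hw'sum : ∑ i ∈ Finset.range n, w i / s = 1 := by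
        rw [← Finset.sum_div, ← hs, div_self hzero]
      obtain ⟨hρ₂den, hρ₂T⟩ := ih (fun i => w i / s) σ
        (fun i => div_nonneg (hw i) hs0) hσ hw'sum
      set ρ₂ := ∑ i ∈ Finset.range n, (w i / s) • σ i with hρ₂
      have hsmulσ : (1 - w n) • ∑ i ∈ Finset.range n, (w i / s) • σ i
            = ∑ i ∈ Finset.range n, w i • σ i := by
        rw [Finset.smul_sum]
        refine Finset.sum_congr rfl (fun i _ => ?_)
        rw [smul_smul]
        congr 1
        rw [hwn]
        field_simp
        ring
      have hsmulT : (1 - w n) • ∑ i ∈ Finset.range n, (w i / s) • T (σ i)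
            = ∑ i ∈ Finset.range n, w i • T (σ i) := by
        rw [Finset.smul_sum]
        refine Finset.sum_congr rfl (fun i _ => ?_)
        rw [smul_smul]
        congr 1
        rw [hwn]
        field_simp
        ring
      have key : ∑ i ∈ Finset.range (n+1), w i • σ i = w n • σ n + (1 - w n) • ρ₂ := by
        rw [Finset.sum_range_succ, hρ₂, hsmulσ, add_comm]
      have hTkey := hlin (w n) (hw n) (by linarith) (σ n) ρ₂ (hσ n) hρ₂den
      constructor
      · rw [key]
        exact isDensityMatrix_convex bF (w n) (hw n) (by linarith) _ _ (hσ n) hρ₂den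
      · rw [key, hTkey, hρ₂T, Finset.sum_range_succ, hsmulT, add_comm]

end FL

section peel
variable {F F' : Type*} [NormedAddCommGroup F] [InnerProductSpace ℂ F] [CompleteSpace F]
  [NormedAddCommGroup F'] [InnerProductSpace ℂ F'] [CompleteSpace F']
  (bF : HilbertBasis ℕ ℂ F) (bF' : HilbertBasis ℕ ℂ F')

lemma re_inner_finsum (s : Finset ℕ) (w : ℕ → ℝ) (S : ℕ → F' →L[ℂ] F') (y : F') :
    (⟪y, (∑ i ∈ s, w i • S i) y⟫).re = ∑ i ∈ s, w i * (⟪y, S i (y)⟫).re := by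
  rw [ContinuousLinearMap.sum_apply, inner_sum, Complex.re_sum]
  refine Finset.sum_congr rfl (fun i _ => ?_)
  rw [ContinuousLinearMap.smul_apply, inner_real_smul_right, Complex.re_ofReal_mul]

lemma peel (T : (F →L[ℂ] F) → (F' →L[ℂ] F'))
    (hmap : ∀ ρ, IsDensityMatrix bF ρ → IsDensityMatrix bF' (T ρ))
    (hlin : ∀ a : ℝ, 0 ≤ a → a ≤ 1 → ∀ ρ₁ ρ₂ : F →L[ℂ] F,
      IsDensityMatrix bF ρ₁ → IsDensityMatrix bF ρ₂ →
      T (a • ρ₁ + (1 - a) • ρ₂) = a • T ρ₁ + (1 - a) • T ρ₂)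
    (ρ : F →L[ℂ] F) (hρ : IsDensityMatrix bF ρ) (r : ℕ → ℝ)
    (hdiag : ∀ i, ρ (bF i) = (r i : ℂ) • bF i) (j : ℕ) :
    HasSum (fun i => r i * (⟪bF' j, T (rankOne bF i) (bF' j)⟫).re)
      ((⟪bF' j, T ρ (bF' j)⟫).re) := by
  set A : ℕ → ℝ := fun i => (⟪bF' j, T (rankOne bF i) (bF' j)⟫).re with hA
  set tval : ℝ := (⟪bF' j, T ρ (bF' j)⟫).re with htval
  have hr0 : ∀ i, 0 ≤ r i := eigen_nonneg bF ρ r hdiag hρ.1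
  have hr1 : HasSum r 1 := eigen_hasSum bF ρ r hdiag hρ
  have hTP : ∀ i, IsDensityMatrix bF' (T (rankOne bF i)) :=
    fun i => hmap _ (rankOne_isDensityMatrix bF i)
  have hA0 : ∀ i, 0 ≤ A i := fun i => (hTP i).1.re_inner_nonneg_right (bF' j)
  have hA1 : ∀ i, A i ≤ 1 := fun i =>
    le_hasSum (trace_re bF' _ (hTP i)) j
      (fun j' _ => (hTP i).1.re_inner_nonneg_right (bF' j'))
  have hsummable : Summable (fun i => r i * A i) :=
    Summable.of_nonneg_of_le (fun i => mul_nonneg (hr0 i) (hA0 i))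
      (fun i => mul_le_of_le_one_right (hr0 i) (hA1 i)) hr1.summable
  have hdense : Dense ((Submodule.span ℂ (Set.range (bF : ℕ → F))) : Set F) :=
    Submodule.dense_iff_topologicalClosure_eq_top.mpr bF.dense_span
  -- the key bounds
  have bound : ∀ n : ℕ, (∑ i ∈ Finset.range n, r i * A i) ≤ tval ∧
      tval ≤ (∑ i ∈ Finset.range n, r i * A i) + (1 - ∑ i ∈ Finset.range n, r i) := by
    intro n
    set sn := ∑ i ∈ Finset.range n, r i with hsn
    have hsn1 : sn ≤ 1 := sum_le_hasSum _ (fun i _ => hr0 i) hr1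
    have h_fin : HasSum (fun m => if m < n then r m else 0) sn := by
      have := hasSum_sum_of_ne_finset_zero (s := Finset.range n) (L := SummationFilter.unconditional ℕ)
        (f := fun m => if m < n then r m else 0)
        (fun m hm => by
          show (if m < n then r m else 0) = 0
          rw [if_neg (by simpa using hm)])
      convert this using 1
      rw [hsn]
      exact (Finset.sum_congr rfl (fun i hi => by
        show (if i < n then r i else 0) = r i
        rw [if_pos (Finset.mem_range.mp hi)])).symm
    have hg : HasSum (fun m => if m < n then 0 else r m) (1 - sn) := by
      have h2 := hr1.sub h_fin
      convert h2 using 1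
      · rfl
      funext m
      by_cases h : m < n <;> simp [h]
    have hg0 : ∀ m, 0 ≤ (if m < n then 0 else r m) := by
      intro m; by_cases h : m < n <;> simp [h, hr0 m]
    by_cases ht0 : 1 - sn = 0
    · -- the tail vanishes, ρ is exactly the finite combination
      have hrz : ∀ m, ¬(m < n) → r m = 0 := by
        intro m hm
        have h1 : (if m < n then 0 else r m) ≤ 0 := by
          rw [ht0] at hg
          exact le_hasSum hg m (fun m' _ => hg0 m')
        rw [if_neg hm] at h1
        exact le_antisymm h1 (hr0 m)
      have hρeq : ρ = ∑ i ∈ Finset.range n, r i • rankOne bF i := by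
        refine ContinuousLinearMap.ext_on hdense ?_
        rintro x ⟨m, rfl⟩
        rw [hdiag m, ContinuousLinearMap.sum_apply]
        have : ∀ i ∈ Finset.range n, (r i • rankOne bF i) (bF m)
            = (if m = i then (r i : ℂ) else 0) • bF m := by
          intro i _
          rw [ContinuousLinearMap.smul_apply, rankOne_diag bF i m]
          by_cases h : m = i <;> simp [h]
        rw [Finset.sum_congr rfl this, ← Finset.sum_smul]
        congr 1
        by_cases hmn : m < n
        · rw [Finset.sum_eq_single m (fun i _ hne => by rw [if_neg (fun h => hne h.symm)])
            (fun h => absurd (Finset.mem_range.mpr hmn) h)]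
          simp
        · rw [Finset.sum_eq_zero (fun i hi => by
            rw [if_neg (fun h => by subst h; exact hmn (Finset.mem_range.mp hi))])]
          rw [hrz m hmn]
          simp
      have hsum1 : ∑ i ∈ Finset.range n, r i = 1 := by linarith
      obtain ⟨_, hTeq⟩ := T_finite_comb bF T hlin n r (fun i => rankOne bF i) hr0
        (fun i => rankOne_isDensityMatrix bF i) hsum1
      have : tval = ∑ i ∈ Finset.range n, r i * A i := by
        rw [htval, hρeq, hTeq, re_inner_finsum]
      constructor
      · rw [this]
      · rw [this, ht0, add_zero]
    · have htpos : 0 < 1 - sn := lt_of_le_of_ne (by linarith) (Ne.symm ht0)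
      set R := ρ - ∑ i ∈ Finset.range n, r i • rankOne bF i with hR
      set τ := (1 - sn)⁻¹ • R with hτ
      have hRdiag : ∀ m, R (bF m) = ((if m < n then 0 else r m : ℝ) : ℂ) • bF m := by
        intro m
        rw [hR, ContinuousLinearMap.sub_apply, hdiag m, ContinuousLinearMap.sum_apply]
        have : ∀ i ∈ Finset.range n, (r i • rankOne bF i) (bF m)
            = (if m = i then (r i : ℂ) else 0) • bF m := by
          intro i _
          rw [ContinuousLinearMap.smul_apply, rankOne_diag bF i m]
          by_cases h : m = i <;> simp [h]
        rw [Finset.sum_congr rfl this, ← Finset.sum_smul, ← sub_smul]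
        congr 1
        by_cases hmn : m < n
        · rw [Finset.sum_eq_single m (fun i _ hne => by rw [if_neg (fun h => hne h.symm)])
            (fun h => absurd (Finset.mem_range.mpr hmn) h), if_pos rfl, if_pos hmn]
          simp
        · rw [Finset.sum_eq_zero (fun i hi => by
            rw [if_neg (fun h => by subst h; exact hmn (Finset.mem_range.mp hi))]),
            if_neg hmn]
          simp
      have hτdiag : ∀ m, τ (bF m)
          = (((1 - sn)⁻¹ * (if m < n then 0 else r m) : ℝ) : ℂ) • bF m := by
        intro m
        rw [hτ, ContinuousLinearMap.smul_apply, hRdiag m]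
        rw [show ((1 - sn)⁻¹ : ℝ) • (((if m < n then 0 else r m : ℝ) : ℂ) • bF m)
          = (((1 - sn)⁻¹ : ℝ) : ℂ) • (((if m < n then 0 else r m : ℝ) : ℂ) • bF m) from
          RCLike.real_smul_eq_coe_smul (K := ℂ) _ _, smul_smul, ← Complex.ofReal_mul]
      have hτden : IsDensityMatrix bF τ := by
        refine isDensityMatrix_of_diag bF τ _ (fun m => mul_nonneg (by positivity) (hg0 m))
          ?_ hτdiag
        have := hg.mul_left (1 - sn)⁻¹
        rwa [inv_mul_cancel₀ ht0] at this
      set w : ℕ → ℝ := fun i => if i = n then 1 - sn else r i with hw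
      set σ : ℕ → F →L[ℂ] F := fun i => if i = n then τ else rankOne bF i with hσ
      have hw0 : ∀ i, 0 ≤ w i := by
        intro i; rw [hw]; by_cases h : i = n <;> simp [h, hr0 i, le_of_lt htpos]
      have hσden : ∀ i, IsDensityMatrix bF (σ i) := by
        intro i; rw [hσ]; by_cases h : i = n <;> simp [h, hτden, rankOne_isDensityMatrix bF i]
      have hwr : ∀ i, i ≠ n → w i = r i := by
        intro i hi
        show (if i = n then 1 - sn else r i) = r i
        rw [if_neg hi]
      have hwn : w n = 1 - sn := by
        show (if n = n then 1 - sn else r n) = 1 - sn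
        rw [if_pos rfl]
      have hσr : ∀ i, i ≠ n → σ i = rankOne bF i := by
        intro i hi
        show (if i = n then τ else rankOne bF i) = rankOne bF i
        rw [if_neg hi]
      have hσn : σ n = τ := by
        show (if n = n then τ else rankOne bF n) = τ
        rw [if_pos rfl]
      have hwsum : ∑ i ∈ Finset.range (n+1), w i = 1 := by
        rw [Finset.sum_range_succ,
          Finset.sum_congr rfl (fun i hi => hwr i (Nat.ne_of_lt (Finset.mem_range.mp hi))),
          hwn, ← hsn]
        ring
      have hcomb : ∑ i ∈ Finset.range (n+1), w i • σ i = ρ := by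
        rw [Finset.sum_range_succ]
        have h1 : ∀ i ∈ Finset.range n, w i • σ i = r i • rankOne bF i := by
          intro i hi
          have hne : i ≠ n := Nat.ne_of_lt (Finset.mem_range.mp hi)
          rw [hwr i hne, hσr i hne]
        have h2 : w n • σ n = (1 - sn) • τ := by rw [hwn, hσn]
        rw [Finset.sum_congr rfl h1, h2, hτ, smul_smul, mul_inv_cancel₀ ht0, one_smul, hR]
        abel
      obtain ⟨_, hTeq⟩ := T_finite_comb bF T hlin (n+1) w σ hw0 hσden hwsum
      rw [hcomb] at hTeq
      have hval : tval = ∑ i ∈ Finset.range n, r i * A i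
          + (1 - sn) * (⟪bF' j, T τ (bF' j)⟫).re := by
        rw [htval, hTeq, re_inner_finsum, Finset.sum_range_succ]
        congr 1
        · refine Finset.sum_congr rfl (fun i hi => ?_)
          have hne : i ≠ n := Nat.ne_of_lt (Finset.mem_range.mp hi)
          rw [hwr i hne, hσr i hne]
        · rw [hwn, hσn]
      have hTτ : IsDensityMatrix bF' (T τ) := hmap τ hτden
      have h01 : 0 ≤ (⟪bF' j, T τ (bF' j)⟫).re ∧ (⟪bF' j, T τ (bF' j)⟫).re ≤ 1 :=
        ⟨hTτ.1.re_inner_nonneg_right (bF' j),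
         le_hasSum (trace_re bF' _ hTτ) j (fun j' _ => hTτ.1.re_inner_nonneg_right (bF' j'))⟩
      constructor
      · rw [hval]
        nlinarith [h01.1, le_of_lt htpos]
      · rw [hval]
        nlinarith [h01.2, le_of_lt htpos]
  -- conclude by squeezing
  have hL := hsummable.hasSum
  have hub : (∑' i, r i * A i) ≤ tval :=
    le_of_tendsto hL.tendsto_sum_nat (Filter.Eventually.of_forall (fun n => (bound n).1))
  have hlb : tval ≤ (∑' i, r i * A i) := by
    have htend : Filter.Tendsto
        (fun n => (∑ i ∈ Finset.range n, r i * A i) + (1 - ∑ i ∈ Finset.range n, r i))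
        Filter.atTop (nhds ((∑' i, r i * A i) + (1 - 1))) :=
      (hL.tendsto_sum_nat).add ((tendsto_const_nhds).sub hr1.tendsto_sum_nat)
    rw [sub_self, add_zero] at htend
    exact ge_of_tendsto htend (Filter.Eventually.of_forall (fun n => (bound n).2))
  have : (∑' i, r i * A i) = tval := le_antisymm hub hlb
  rw [← this]
  exact hL

end peel

lemma exists_subgradient {f : ℝ → ℝ} (hf : ConvexOn ℝ (Set.Ici 0) f) {m : ℝ} (hm : 0 < m) :
    ∃ k : ℝ, ∀ x : ℝ, 0 ≤ x → f m + k * (x - m) ≤ f x := by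
  set S : Set ℝ := {s : ℝ | ∃ y : ℝ, m < y ∧ s = (f y - f m) / (y - m)} with hS
  have hne : S.Nonempty := ⟨(f (m+1) - f m) / (m + 1 - m), m + 1, by linarith, rfl⟩
  have hbdd : BddBelow S := by
    refine ⟨(f m - f (m/2)) / (m - m/2), ?_⟩
    rintro s ⟨y, hy, rfl⟩
    exact hf.slope_mono_adjacent (x := m/2) (y := m) (z := y)
      (Set.mem_Ici.mpr (by linarith)) (Set.mem_Ici.mpr (by linarith)) (by linarith) hy
  refine ⟨sInf S, fun x hx => ?_⟩
  rcases lt_trichotomy x m with hlt | heq | hgt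
  · -- x < m : slope f x m ≤ every element of S, so ≤ sInf S
    have hle : (f m - f x) / (m - x) ≤ sInf S := by
      refine le_csInf hne ?_
      rintro s ⟨y, hy, rfl⟩
      exact hf.slope_mono_adjacent (Set.mem_Ici.mpr hx) (Set.mem_Ici.mpr (by linarith))
        hlt hy
    have hpos : 0 < m - x := by linarith
    rw [div_le_iff₀ hpos] at hle
    nlinarith [hle]
  · subst heq; simp
  · -- m < x : sInf S ≤ slope f m x
    have hle : sInf S ≤ (f x - f m) / (x - m) := csInf_le hbdd ⟨x, hgt, rfl⟩
    have hpos : 0 < x - m := by linarith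
    rw [le_div_iff₀ hpos] at hle
    linarith

/-- Theorem 2 of the paper (generalizing Sorkin): for a convex-linear map `T` of
density matrices with a positive-definite fixed point `T ρ∞ = ρ̃∞`, and any `ρ₀`
commuting with `ρ∞` (with `T ρ₀` commuting with `ρ̃∞`), diagonalized in common
orthonormal eigenbases as `ρ₀ = Σ p_i|i⟩⟨i|`, `ρ∞ = Σ q_i|i⟩⟨i|`,
`T ρ₀ = Σ p̃_i|ĩ⟩⟨ĩ|`, `ρ̃∞ = Σ q̃_i|ĩ⟩⟨ĩ|`, and such that
`Tr[ρ∞ |f(ρ₀ ρ∞⁻¹)|] = Σ q_i |f(p_i/q_i)| < ∞`, one has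
`-Tr[ρ̃∞ f(T(ρ₀) ρ̃∞⁻¹)] ≥ -Tr[ρ∞ f(ρ₀ ρ∞⁻¹)]`. -/
theorem nondecreasing_functional
    {F F' : Type*} [NormedAddCommGroup F] [InnerProductSpace ℂ F] [CompleteSpace F]
    [NormedAddCommGroup F'] [InnerProductSpace ℂ F'] [CompleteSpace F']
    (bF : HilbertBasis ℕ ℂ F) (bF' : HilbertBasis ℕ ℂ F')
    (T : (F →L[ℂ] F) → (F' →L[ℂ] F'))
    (hmap : ∀ ρ, IsDensityMatrix bF ρ → IsDensityMatrix bF' (T ρ))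
    (hlin : ∀ a : ℝ, 0 ≤ a → a ≤ 1 → ∀ ρ₁ ρ₂ : F →L[ℂ] F,
      IsDensityMatrix bF ρ₁ → IsDensityMatrix bF ρ₂ →
      T (a • ρ₁ + (1 - a) • ρ₂) = a • T ρ₁ + (1 - a) • T ρ₂)
    (f : ℝ → ℝ)
    (hf_cont : ContinuousOn f (Set.Ici 0))
    (hf_conv : ConvexOn ℝ (Set.Ici 0) f)
    (hf_reg : ∃ c₁ c₂ c₃ : ℝ, 0 ≤ c₁ ∧ 0 ≤ c₂ ∧ 0 ≤ c₃ ∧ ∃ δ > (0:ℝ),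
      ∀ x : ℝ, 0 ≤ x → ∀ ε : ℝ, |ε| ≤ δ →
        |f ((1 - ε) * x) - f x| ≤ |ε| * (c₁ * |f x| + c₂ * |x| + c₃))
    (ρinf : F →L[ℂ] F) (ρtinf : F' →L[ℂ] F')
    (hρinf : IsDensityMatrix bF ρinf) (hρtinf : IsDensityMatrix bF' ρtinf)
    (q : ℕ → ℝ) (hq : ∀ i, 0 < q i) (hρinf_diag : ∀ i, ρinf (bF i) = (q i : ℂ) • bF i)
    (qt : ℕ → ℝ) (hqt : ∀ i, 0 < qt i)
    (hρtinf_diag : ∀ i, ρtinf (bF' i) = (qt i : ℂ) • bF' i)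
    (hfix : T ρinf = ρtinf)
    (ρ₀ : F →L[ℂ] F) (hρ₀ : IsDensityMatrix bF ρ₀)
    (p : ℕ → ℝ) (hρ₀_diag : ∀ i, ρ₀ (bF i) = (p i : ℂ) • bF i)
    (pt : ℕ → ℝ) (hTρ₀_diag : ∀ i, T ρ₀ (bF' i) = (pt i : ℂ) • bF' i)
    (hfin : Summable (fun i => q i * |f (p i / q i)|)) :
    -(∑' i, qt i * f (pt i / qt i)) ≥ -(∑' i, q i * f (p i / q i)) := by
  classical
  set A : ℕ → ℕ → ℝ := fun j i => (⟪bF' j, T (rankOne bF i) (bF' j)⟫).re with hAdef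
  have hTP : ∀ i, IsDensityMatrix bF' (T (rankOne bF i)) :=
    fun i => hmap _ (rankOne_isDensityMatrix bF i)
  have hA0 : ∀ j i, 0 ≤ A j i := fun j i => (hTP i).1.re_inner_nonneg_right (bF' j)
  have hA1 : ∀ i, HasSum (fun j => A j i) 1 := fun i => trace_re bF' _ (hTP i)
  have hAle1 : ∀ j i, A j i ≤ 1 := fun j i => le_hasSum (hA1 i) j (fun j' _ => hA0 j' i)
  have hq_sum : ∀ j, HasSum (fun i => q i * A j i) (qt j) := by
    intro j
    have h := peel bF bF' T hmap hlin ρinf hρinf q hρinf_diag j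
    rw [hfix, diag_inner_basis bF' ρtinf (fun i => ((qt i : ℝ) : ℂ)) hρtinf_diag j,
      Complex.ofReal_re] at h
    exact h
  have hp_sum : ∀ j, HasSum (fun i => p i * A j i) (pt j) := by
    intro j
    have h := peel bF bF' T hmap hlin ρ₀ hρ₀ p hρ₀_diag j
    rw [diag_inner_basis bF' (T ρ₀) (fun i => ((pt i : ℝ) : ℂ)) hTρ₀_diag j,
      Complex.ofReal_re] at h
    exact h
  have hp0 : ∀ i, 0 ≤ p i := eigen_nonneg bF ρ₀ p hρ₀_diag hρ₀.1
  have hpt0 : ∀ j, 0 ≤ pt j := eigen_nonneg bF' (T ρ₀) pt hTρ₀_diag (hmap ρ₀ hρ₀).1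
  have hpt1 : HasSum pt 1 := eigen_hasSum bF' (T ρ₀) pt hTρ₀_diag (hmap ρ₀ hρ₀)
  have hqt1 : HasSum qt 1 := eigen_hasSum bF' ρtinf qt hρtinf_diag hρtinf
  set φ : ℕ → ℝ := fun i => f (p i / q i) with hφdef
  -- row sums with |φ|
  have habs : ∀ i, HasSum (fun j => q i * A j i * |φ i|) (q i * |φ i|) := by
    intro i
    have h := ((hA1 i).mul_left (q i)).mul_right (|φ i|)
    simpa using h
  have hsgn : ∀ i, HasSum (fun j => q i * A j i * φ i) (q i * φ i) := by
    intro i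
    have h := ((hA1 i).mul_left (q i)).mul_right (φ i)
    simpa using h
  -- summability over the product, (i,j) order
  have hWabs : Summable (fun z : ℕ × ℕ => q z.1 * A z.2 z.1 * |φ z.1|) := by
    refine (summable_prod_of_nonneg ?_).mpr ⟨fun i => (habs i).summable, ?_⟩
    · intro z
      exact mul_nonneg (mul_nonneg (hq z.1).le (hA0 z.2 z.1)) (abs_nonneg _)
    · have he : (fun i => ∑' j, q i * A j i * |φ i|) = fun i => q i * |φ i| :=
        funext (fun i => (habs i).tsum_eq)
      rw [he]
      exact hfin
  have hWsgn : Summable (fun z : ℕ × ℕ => q z.1 * A z.2 z.1 * φ z.1) := by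
    apply summable_abs_iff.mp
    have he : (fun z : ℕ × ℕ => |q z.1 * A z.2 z.1 * φ z.1|)
        = fun z : ℕ × ℕ => q z.1 * A z.2 z.1 * |φ z.1| := by
      funext z
      rw [abs_mul, abs_of_nonneg (mul_nonneg (hq z.1).le (hA0 z.2 z.1))]
    rw [he]
    exact hWabs
  -- column sums (fixed j) summability
  have hHabs_row : ∀ j, Summable (fun i => q i * A j i * |φ i|) := by
    intro j
    refine Summable.of_nonneg_of_le
      (fun i => mul_nonneg (mul_nonneg (hq i).le (hA0 j i)) (abs_nonneg _))
      (fun i => ?_) hfin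
    have h1 : q i * A j i ≤ q i * 1 := mul_le_mul_of_nonneg_left (hAle1 j i) (hq i).le
    calc q i * A j i * |φ i| ≤ q i * 1 * |φ i| :=
          mul_le_mul_of_nonneg_right h1 (abs_nonneg _)
      _ = q i * |φ i| := by ring
  have hHsgn_row : ∀ j, Summable (fun i => q i * A j i * φ i) := by
    intro j
    apply summable_abs_iff.mp
    have he : (fun i => |q i * A j i * φ i|) = fun i => q i * A j i * |φ i| := by
      funext i
      rw [abs_mul, abs_of_nonneg (mul_nonneg (hq i).le (hA0 j i))]
    rw [he]
    exact hHabs_row j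
  set H : ℕ → ℝ := fun j => ∑' i, q i * A j i * φ i with hHdef
  set H' : ℕ → ℝ := fun j => ∑' i, q i * A j i * |φ i| with hH'def
  -- Summable H'
  have hWabs_swap : Summable (fun z : ℕ × ℕ => q z.2 * A z.1 z.2 * |φ z.2|) := by
    have h := hWabs.prod_symm
    exact h
  have hH'sum : Summable H' := by
    have h := (summable_prod_of_nonneg (f := fun z : ℕ × ℕ => q z.2 * A z.1 z.2 * |φ z.2|)
      (fun z => mul_nonneg (mul_nonneg (hq z.2).le (hA0 z.1 z.2)) (abs_nonneg _))).mp
      hWabs_swap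
    exact h.2
  have hHsum : Summable H := by
    apply summable_abs_iff.mp
    refine Summable.of_nonneg_of_le (fun j => abs_nonneg _) (fun j => ?_) hH'sum
    rw [hHdef, hH'def]
    have hne : (fun i => ‖q i * A j i * φ i‖) = fun i => q i * A j i * |φ i| := by
      funext i
      rw [Real.norm_eq_abs, abs_mul, abs_of_nonneg (mul_nonneg (hq i).le (hA0 j i))]
    have hn : Summable (fun i => ‖q i * A j i * φ i‖) := by
      rw [hne]; exact hHabs_row j
    calc |∑' i, q i * A j i * φ i| ≤ ∑' i, ‖q i * A j i * φ i‖ := norm_tsum_le_tsum_norm hn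
      _ = ∑' i, q i * A j i * |φ i| := by
          refine tsum_congr (fun i => ?_)
          rw [Real.norm_eq_abs, abs_mul, abs_of_nonneg (mul_nonneg (hq i).le (hA0 j i))]
  -- Jensen for each j
  have key : ∀ j, qt j * f (pt j / qt j) ≤ H j := by
    intro j
    show qt j * f (pt j / qt j) ≤ ∑' i, q i * A j i * φ i
    by_cases hptj : pt j = 0
    · have hzero : ∀ i, p i * A j i = 0 := by
        intro i
        have hle := le_hasSum (hp_sum j) i
          (fun i' _ => mul_nonneg (hp0 i') (hA0 j i'))
        rw [hptj] at hle
        exact le_antisymm hle (mul_nonneg (hp0 i) (hA0 j i))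
      have hterm : ∀ i, q i * A j i * φ i = q i * A j i * f 0 := by
        intro i
        by_cases hA : A j i = 0
        · rw [hA]; ring
        · have hpi : p i = 0 := by
            rcases mul_eq_zero.mp (hzero i) with h | h
            · exact h
            · exact absurd h hA
          rw [hφdef]
          simp only
          rw [hpi, zero_div]
      have hsum0 : HasSum (fun i => q i * A j i * f 0) (qt j * f 0) := by
        have h := (hq_sum j).mul_right (f 0)
        exact h
      rw [funext hterm, hsum0.tsum_eq, hptj, zero_div]
    · have hmpos : 0 < pt j / qt j :=
        div_pos (lt_of_le_of_ne (hpt0 j) (Ne.symm hptj)) (hqt j)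
      obtain ⟨k, hk⟩ := exists_subgradient hf_conv hmpos
      set m := pt j / qt j with hm
      have hqm : qt j * m = pt j := by
        rw [hm, mul_comm]; exact div_mul_cancel₀ (pt j) (hqt j).ne'
      have hpt_le : ∀ i, q i * A j i * (f m + k * (p i / q i - m)) ≤ q i * A j i * φ i := by
        intro i
        exact mul_le_mul_of_nonneg_left (hk _ (div_nonneg (hp0 i) (hq i).le))
          (mul_nonneg (hq i).le (hA0 j i))
      have hterm_eq : ∀ i, q i * A j i * (f m + k * (p i / q i - m))
          = (f m - k * m) * (q i * A j i) + k * (p i * A j i) := by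
        intro i
        have hqp : q i * (p i / q i) = p i := by
          rw [mul_comm]; exact div_mul_cancel₀ (p i) (hq i).ne'
        calc q i * A j i * (f m + k * (p i / q i - m))
            = (f m - k * m) * (q i * A j i) + k * ((q i * (p i / q i)) * A j i) := by ring
          _ = (f m - k * m) * (q i * A j i) + k * (p i * A j i) := by rw [hqp]
      have hlhs : HasSum (fun i => q i * A j i * (f m + k * (p i / q i - m)))
          ((f m - k * m) * qt j + k * pt j) := by
        rw [funext hterm_eq]
        exact ((hq_sum j).mul_left (f m - k * m)).add ((hp_sum j).mul_left k)
      have hle := hasSum_le hpt_le hlhs (hHsgn_row j).hasSum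
      have : qt j * f m = (f m - k * m) * qt j + k * pt j := by
        rw [← hqm]; ring
      linarith
  -- lower bound for summability of G
  obtain ⟨k1, hk1⟩ := exists_subgradient hf_conv (one_pos)
  set G : ℕ → ℝ := fun j => qt j * f (pt j / qt j) with hGdef
  set L : ℕ → ℝ := fun j => qt j * f 1 + k1 * (pt j - qt j) with hLdef
  have hLsum : Summable L := by
    rw [hLdef]
    exact (hqt1.summable.mul_right (f 1)).add
      (((hpt1.summable.sub hqt1.summable)).mul_left k1)
  have hGL : ∀ j, L j ≤ G j := by
    intro j
    have hx : (0:ℝ) ≤ pt j / qt j := div_nonneg (hpt0 j) (hqt j).le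
    have h := hk1 _ hx
    have h2 := mul_le_mul_of_nonneg_left h (hqt j).le
    have hqm : qt j * (pt j / qt j) = pt j := by
      rw [mul_comm]; exact div_mul_cancel₀ (pt j) (hqt j).ne'
    show qt j * f 1 + k1 * (pt j - qt j) ≤ qt j * f (pt j / qt j)
    have h3 : qt j * (f 1 + k1 * (pt j / qt j - 1))
        = qt j * f 1 + k1 * (pt j - qt j) := by
      calc qt j * (f 1 + k1 * (pt j / qt j - 1))
          = qt j * f 1 + k1 * (qt j * (pt j / qt j) - qt j) := by ring
        _ = qt j * f 1 + k1 * (pt j - qt j) := by rw [hqm]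
    linarith [h2]
  have hGH : ∀ j, G j ≤ H j := key
  have hGsum : Summable G := by
    have hdiff : Summable (fun j => G j - L j) := by
      refine Summable.of_nonneg_of_le (fun j => sub_nonneg.mpr (hGL j))
        (fun j => sub_le_sub_right (hGH j) (L j)) (hHsum.sub hLsum)
    have : (fun j => G j - L j + L j) = G := by funext j; ring
    rw [← this]
    exact hdiff.add hLsum
  -- the double-sum identity
  have hdouble : ∑' j, H j = ∑' i, q i * φ i := by
    rw [hHdef]
    have hcomm := Summable.tsum_comm (f := fun i j => q i * A j i * φ i) hWsgn
    rw [hcomm]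
    exact tsum_congr (fun i => (hsgn i).tsum_eq)
  have hfinal : ∑' j, G j ≤ ∑' i, q i * φ i := by
    rw [← hdouble]
    exact Summable.tsum_le_tsum hGH hGsum hHsum
  have hgoal : ∑' j, qt j * f (pt j / qt j) ≤ ∑' i, q i * f (p i / q i) := hfinal
  exact neg_le_neg hgoal
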